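/- The squared 2-Wasserstein distance between two one-dimensional Gaussian distributions N(μ₁, σ₁²) and N(μ₂, σ₂²) equals (μ₁ − μ₂)² + (σ₁ − σ₂)². In particular, for isotropic Gaussians in ℝⁿ, N(m₁, σ₁² I) and N(m₂, σ₂² I), the squared 2-Wasserstein distance equals ‖m₁ − m₂‖² + n(σ₁ − σ₂)². -/

import Mathlib

open MeasureTheory ProbabilityTheory Filter
open scoped NNReal Topology

/-- The 2-Wasserstein distance: infimum over couplings of the square root of the
expected squared distance. -/
noncomputable def W2 {E : Type*} [NormedAddCommGroup E] [MeasurableSpace E]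
    (μ ν : Measure E) : ℝ :=
  sInf {r : ℝ | ∃ γ : Measure (E × E), γ.map Prod.fst = μ ∧ γ.map Prod.snd = ν ∧
    r = (∫ p : E × E, ‖p.1 - p.2‖ ^ 2 ∂γ) ^ ((1 : ℝ) / 2)}

/-- Isotropic Gaussian measure `N(m, v·I)` on `ℝⁿ`, as a product of 1D Gaussians. -/
noncomputable def isoGaussian (n : ℕ) (m : EuclideanSpace ℝ (Fin n)) (v : ℝ≥0) :
    Measure (EuclideanSpace ℝ (Fin n)) :=
  Measure.map (MeasurableEquiv.toLp 2 (Fin n → ℝ))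
    (Measure.pi fun i => gaussianReal (m i) v)

open Real
open scoped ENNReal

lemma abs_le_exp_sq (x : ℝ) : |x| ≤ rexp (x^2/4) := by
  have h1 : |x| ≤ 1 + x^2/4 := by nlinarith [sq_nonneg (|x| - 2), sq_abs x]
  have h2 : 1 + x^2/4 ≤ rexp (x^2/4) := by
    have := Real.add_one_le_exp (x^2/4); linarith
  linarith

lemma mul_exp_bound (x : ℝ) : |x * rexp (-x^2/2)| ≤ rexp (-x^2/4) := by
  rw [abs_mul, abs_of_pos (exp_pos _)]
  calc |x| * rexp (-x^2/2) ≤ rexp (x^2/4) * rexp (-x^2/2) :=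
        mul_le_mul_of_nonneg_right (abs_le_exp_sq x) (exp_pos _).le
    _ = rexp (-x^2/4) := by rw [← Real.exp_add]; ring_nf

lemma sq_mul_exp_bound (x : ℝ) : |x^2 * rexp (-x^2/2)| ≤ 4 * rexp (-x^2/4) := by
  have h1 : x^2/4 + 1 ≤ rexp (x^2/4) := Real.add_one_le_exp _
  have h2 : x^2 ≤ 4 * rexp (x^2/4) := by nlinarith [exp_pos (x^2/4)]
  rw [abs_mul, abs_of_pos (exp_pos _), abs_sq]
  calc x^2 * rexp (-x^2/2) ≤ 4 * rexp (x^2/4) * rexp (-x^2/2) :=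
        mul_le_mul_of_nonneg_right h2 (exp_pos _).le
    _ = 4 * rexp (-x^2/4) := by rw [mul_assoc, ← Real.exp_add]; ring_nf

lemma sq_tendsto_atBot : Tendsto (fun x : ℝ => x^2) atBot atTop := by
  have : (fun x : ℝ => x^2) = (fun y : ℝ => y^2) ∘ (fun x => -x) := by
    funext x; simp
  rw [this]
  exact (tendsto_pow_atTop two_ne_zero).comp tendsto_neg_atBot_atTop

lemma exp_quarter_tendsto_top : Tendsto (fun x : ℝ => rexp (-x^2/4)) atTop (𝓝 0) := by
  apply Real.tendsto_exp_atBot.comp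
  apply Tendsto.atBot_div_const (by norm_num)
  exact tendsto_neg_atBot_iff.mpr (tendsto_pow_atTop two_ne_zero)

lemma exp_quarter_tendsto_bot : Tendsto (fun x : ℝ => rexp (-x^2/4)) atBot (𝓝 0) := by
  apply Real.tendsto_exp_atBot.comp
  apply Tendsto.atBot_div_const (by norm_num)
  exact tendsto_neg_atBot_iff.mpr sq_tendsto_atBot

lemma exp_half_tendsto_top : Tendsto (fun x : ℝ => rexp (-x^2/2)) atTop (𝓝 0) := by
  apply Real.tendsto_exp_atBot.comp
  apply Tendsto.atBot_div_const (by norm_num)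
  exact tendsto_neg_atBot_iff.mpr (tendsto_pow_atTop two_ne_zero)

lemma exp_half_tendsto_bot : Tendsto (fun x : ℝ => rexp (-x^2/2)) atBot (𝓝 0) := by
  apply Real.tendsto_exp_atBot.comp
  apply Tendsto.atBot_div_const (by norm_num)
  exact tendsto_neg_atBot_iff.mpr sq_tendsto_atBot

lemma mul_exp_tendsto_top : Tendsto (fun x : ℝ => x * rexp (-x^2/2)) atTop (𝓝 0) :=
  squeeze_zero_norm mul_exp_bound exp_quarter_tendsto_top

lemma mul_exp_tendsto_bot : Tendsto (fun x : ℝ => x * rexp (-x^2/2)) atBot (𝓝 0) :=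
  squeeze_zero_norm mul_exp_bound exp_quarter_tendsto_bot

lemma integrable_exp_half : Integrable (fun x : ℝ => rexp (-x^2/2)) := by
  have := integrable_exp_neg_mul_sq (b := (1:ℝ)/2) (by norm_num)
  convert this using 2 with x
  ring_nf

lemma integrable_mul_exp_half : Integrable (fun x : ℝ => x * rexp (-x^2/2)) := by
  have := integrable_mul_exp_neg_mul_sq (b := (1:ℝ)/2) (by norm_num)
  convert this using 2 with x
  ring_nf

lemma integrable_sq_mul_exp_half : Integrable (fun x : ℝ => x^2 * rexp (-x^2/2)) := by
  have hbase : Integrable (fun x : ℝ => 4 * rexp (-x^2/4)) := by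
    have := (integrable_exp_neg_mul_sq (b := (1:ℝ)/4) (by norm_num)).const_mul 4
    convert this using 2 with x
    ring_nf
  refine hbase.mono' ?_ (ae_of_all _ sq_mul_exp_bound)
  exact (Continuous.mul (by continuity) (by continuity)).aestronglyMeasurable

lemma hasDerivAt_exp_half (x : ℝ) :
    HasDerivAt (fun x : ℝ => -rexp (-x^2/2)) (x * rexp (-x^2/2)) x := by
  have h : HasDerivAt (fun x : ℝ => -x^2/2) (-x) x := by
    have := ((hasDerivAt_pow 2 x).neg).div_const 2
    simpa using this.congr_deriv (by ring)
  have := (h.exp).neg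
  exact this.congr_deriv (by ring)

lemma integral_exp_half : ∫ x : ℝ, rexp (-x^2/2) = Real.sqrt (2*π) := by
  have := integral_gaussian ((1:ℝ)/2)
  rw [show π / ((1:ℝ)/2) = 2*π by ring] at this
  rw [← this]
  congr 1 with x
  ring_nf

lemma integral_mul_exp_half : ∫ x : ℝ, x * rexp (-x^2/2) = 0 := by
  have h := integral_of_hasDerivAt_of_tendsto (E := ℝ)
    (f := fun x : ℝ => -rexp (-x^2/2)) (f' := fun x => x * rexp (-x^2/2))
    hasDerivAt_exp_half integrable_mul_exp_half
    (by simpa using exp_half_tendsto_bot.neg) (by simpa using exp_half_tendsto_top.neg)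
  simpa using h

lemma hasDerivAt_mul_exp_half (x : ℝ) :
    HasDerivAt (fun x : ℝ => x * rexp (-x^2/2)) (rexp (-x^2/2) - x^2 * rexp (-x^2/2)) x := by
  have h : HasDerivAt (fun x : ℝ => -x^2/2) (-x) x := by
    have := ((hasDerivAt_pow 2 x).neg).div_const 2
    simpa using this.congr_deriv (by ring)
  have := (hasDerivAt_id x).mul h.exp
  exact this.congr_deriv (by simp only [id_eq]; ring)

lemma integral_sq_mul_exp_half : ∫ x : ℝ, x^2 * rexp (-x^2/2) = Real.sqrt (2*π) := by
  have h := integral_of_hasDerivAt_of_tendsto (E := ℝ)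
    (f := fun x : ℝ => x * rexp (-x^2/2))
    (f' := fun x => rexp (-x^2/2) - x^2 * rexp (-x^2/2))
    hasDerivAt_mul_exp_half (integrable_exp_half.sub integrable_sq_mul_exp_half)
    mul_exp_tendsto_bot mul_exp_tendsto_top
  rw [integral_sub integrable_exp_half integrable_sq_mul_exp_half, integral_exp_half] at h
  simp only [sub_zero] at h
  linarith

lemma pdf01 (x : ℝ) : gaussianPDFReal 0 1 x = (Real.sqrt (2*π))⁻¹ * rexp (-x^2/2) := by
  simp [gaussianPDFReal]

lemma stdGaussian_eq_withDensity :
    gaussianReal 0 1 = volume.withDensity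
      (fun x => ((gaussianPDFReal 0 1 x).toNNReal : ℝ≥0∞)) := by
  rw [gaussianReal_of_var_ne_zero 0 one_ne_zero]
  rfl

lemma meas_toNN : Measurable (fun x => (gaussianPDFReal 0 1 x).toNNReal) :=
  measurable_real_toNNReal.comp (measurable_gaussianPDFReal 0 1)

lemma stdGaussian_integral_eq (g : ℝ → ℝ) :
    ∫ z, g z ∂(gaussianReal 0 1) = ∫ x, gaussianPDFReal 0 1 x * g x := by
  rw [stdGaussian_eq_withDensity, integral_withDensity_eq_integral_smul meas_toNN]
  congr 1 with x
  simp [NNReal.smul_def, Real.coe_toNNReal _ (gaussianPDFReal_nonneg 0 1 x)]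

lemma stdGaussian_integrable_iff (g : ℝ → ℝ) :
    Integrable g (gaussianReal 0 1) ↔ Integrable (fun x => gaussianPDFReal 0 1 x * g x) := by
  rw [stdGaussian_eq_withDensity, integrable_withDensity_iff_integrable_smul meas_toNN]
  constructor <;> intro h <;> refine h.congr (ae_of_all _ fun x => ?_) <;>
    simp [NNReal.smul_def, Real.coe_toNNReal _ (gaussianPDFReal_nonneg 0 1 x)]

lemma integrable_id_std : Integrable (fun z : ℝ => z) (gaussianReal 0 1) := by
  rw [stdGaussian_integrable_iff]
  have := integrable_mul_exp_half.const_mul (Real.sqrt (2*π))⁻¹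
  refine this.congr (ae_of_all _ fun x => ?_)
  simp only [pdf01]; ring

lemma integrable_sq_std : Integrable (fun z : ℝ => z^2) (gaussianReal 0 1) := by
  rw [stdGaussian_integrable_iff]
  have := integrable_sq_mul_exp_half.const_mul (Real.sqrt (2*π))⁻¹
  refine this.congr (ae_of_all _ fun x => ?_)
  simp only [pdf01]; ring

lemma sqrt_two_pi_pos : 0 < Real.sqrt (2*π) :=
  Real.sqrt_pos.mpr (by positivity)

lemma integral_id_std : ∫ z, z ∂(gaussianReal 0 1) = 0 := by
  rw [stdGaussian_integral_eq]
  have : ∀ x : ℝ, gaussianPDFReal 0 1 x * x = (Real.sqrt (2*π))⁻¹ * (x * rexp (-x^2/2)) := by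
    intro x; simp only [pdf01]; ring
  simp_rw [this, integral_const_mul, integral_mul_exp_half, mul_zero]

lemma integral_sq_std : ∫ z, z^2 ∂(gaussianReal 0 1) = 1 := by
  rw [stdGaussian_integral_eq]
  have : ∀ x : ℝ, gaussianPDFReal 0 1 x * x^2
      = (Real.sqrt (2*π))⁻¹ * (x^2 * rexp (-x^2/2)) := by
    intro x; simp only [pdf01]; ring
  simp_rw [this, integral_const_mul, integral_sq_mul_exp_half,
    inv_mul_cancel₀ sqrt_two_pi_pos.ne']

lemma gaussianReal_sq_repr (μ : ℝ) (σ : ℝ≥0) :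
    gaussianReal μ (σ^2) = (gaussianReal 0 1).map (fun z => (σ:ℝ) * z + μ) := by
  have h1 : (gaussianReal 0 1).map (fun z => (σ:ℝ) * z) = gaussianReal 0 (σ^2) := by
    have := gaussianReal_map_const_mul (μ := 0) (v := 1) (σ:ℝ)
    simp only [mul_zero, mul_one] at this
    rw [this]
    congr 1
  have h2 : ((gaussianReal 0 1).map (fun z => (σ:ℝ) * z)).map (fun x => x + μ)
      = gaussianReal μ (σ^2) := by
    rw [h1]
    simpa using gaussianReal_map_add_const (μ := 0) (v := σ^2) μ
  rw [← h2, Measure.map_map (measurable_id'.add_const μ) (measurable_const_mul _)]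
  rfl

section Moments
variable (μ : ℝ) (σ : ℝ≥0)

lemma integrable_affine_std (a b : ℝ) :
    Integrable (fun z : ℝ => a * z + b) (gaussianReal 0 1) :=
  (integrable_id_std.const_mul a).add (integrable_const b)

lemma integrable_affine_sq_std (a b : ℝ) :
    Integrable (fun z : ℝ => (a * z + b)^2) (gaussianReal 0 1) := by
  have h : Integrable (fun z : ℝ => a^2 * z^2 + (2*a*b) * z + b^2) (gaussianReal 0 1) :=
    ((integrable_sq_std.const_mul (a^2)).add (integrable_id_std.const_mul (2*a*b))).add
      (integrable_const (b^2))
  exact h.congr (ae_of_all _ fun z => by ring)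

lemma integral_affine_std (a b : ℝ) :
    ∫ z, (a * z + b) ∂(gaussianReal 0 1) = b := by
  rw [integral_add (integrable_id_std.const_mul a) (integrable_const b),
    integral_const_mul, integral_id_std, integral_const]
  simp

lemma integral_affine_sq_std (a b : ℝ) :
    ∫ z, (a * z + b)^2 ∂(gaussianReal 0 1) = a^2 + b^2 := by
  have h : ∀ z : ℝ, (a * z + b)^2 = a^2 * z^2 + ((2*a*b) * z + b^2) := fun z => by ring
  simp_rw [h]
  rw [integral_add (integrable_sq_std.const_mul (a^2))
      (integrable_affine_std (2*a*b) (b^2)),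
    integral_const_mul, integral_sq_std, integral_affine_std]
  ring

lemma integrable_id_gaussian : Integrable (fun x : ℝ => x) (gaussianReal μ (σ^2)) := by
  rw [gaussianReal_sq_repr]
  rw [integrable_map_measure measurable_id'.aestronglyMeasurable
    (by fun_prop : AEMeasurable (fun z : ℝ => (σ:ℝ) * z + μ) (gaussianReal 0 1))]
  exact integrable_affine_std σ μ

lemma integrable_sq_gaussian : Integrable (fun x : ℝ => x^2) (gaussianReal μ (σ^2)) := by
  rw [gaussianReal_sq_repr]
  rw [integrable_map_measure (by fun_prop)
    (by fun_prop : AEMeasurable (fun z : ℝ => (σ:ℝ) * z + μ) (gaussianReal 0 1))]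
  exact integrable_affine_sq_std σ μ

lemma integrable_centered_sq_gaussian (c : ℝ) :
    Integrable (fun x : ℝ => (x - c)^2) (gaussianReal μ (σ^2)) := by
  have h : Integrable (fun x : ℝ => x^2 + ((-2*c) * x + c^2)) (gaussianReal μ (σ^2)) :=
    (integrable_sq_gaussian μ σ).add
      (((integrable_id_gaussian μ σ).const_mul (-2*c)).add (integrable_const (c^2)))
  exact h.congr (ae_of_all _ fun x => by ring)

lemma integral_id_gaussian : ∫ x, x ∂(gaussianReal μ (σ^2)) = μ := by
  rw [gaussianReal_sq_repr, integral_map (by fun_prop) measurable_id'.aestronglyMeasurable]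
  exact integral_affine_std σ μ

lemma integral_centered_sq_gaussian :
    ∫ x, (x - μ)^2 ∂(gaussianReal μ (σ^2)) = (σ:ℝ)^2 := by
  rw [gaussianReal_sq_repr, integral_map (by fun_prop) ((measurable_id'.sub_const μ).pow_const 2).aestronglyMeasurable]
  have h : ∀ z : ℝ, ((σ:ℝ) * z + μ - μ)^2 = ((σ:ℝ) * z + 0)^2 := fun z => by ring
  simp_rw [h, integral_affine_sq_std]
  ring

end Moments

section Transfer
variable {α : Type*} [MeasurableSpace α] {γ : Measure α} {ν : Measure ℝ} {φ : α → ℝ}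

lemma transfer_integrable (hφ : Measurable φ) (h : γ.map φ = ν) {g : ℝ → ℝ}
    (hg : Measurable g) (hgi : Integrable g ν) : Integrable (fun p => g (φ p)) γ := by
  rw [← h] at hgi
  exact (integrable_map_measure hg.aestronglyMeasurable hφ.aemeasurable).mp hgi

lemma transfer_integral (hφ : Measurable φ) (h : γ.map φ = ν) {g : ℝ → ℝ}
    (hg : Measurable g) : ∫ p, g (φ p) ∂γ = ∫ x, g x ∂ν := by
  rw [← h, integral_map hφ.aemeasurable hg.aestronglyMeasurable]

end Transfer

section Lower

variable {μ₁ μ₂ : ℝ} {σ₁ σ₂ : ℝ≥0} {γ : Measure (ℝ × ℝ)}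

/-- Lower bound for any coupling of two 1D Gaussians, together with integrability. -/
lemma oneD_coupling_bound
    (h1 : γ.map Prod.fst = gaussianReal μ₁ (σ₁^2))
    (h2 : γ.map Prod.snd = gaussianReal μ₂ (σ₂^2)) :
    Integrable (fun p : ℝ × ℝ => (p.1 - p.2)^2) γ ∧
      (μ₁ - μ₂)^2 + ((σ₁:ℝ) - σ₂)^2 ≤ ∫ p : ℝ × ℝ, (p.1 - p.2)^2 ∂γ := by
  have m1 : Measurable (fun x : ℝ => (x - μ₁)^2) := (measurable_id'.sub_const μ₁).pow_const 2
  have m2 : Measurable (fun x : ℝ => (x - μ₂)^2) := (measurable_id'.sub_const μ₂).pow_const 2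
  have m1' : Measurable (fun x : ℝ => x - μ₁) := measurable_id'.sub_const μ₁
  have m2' : Measurable (fun x : ℝ => x - μ₂) := measurable_id'.sub_const μ₂
  have hF2 : Integrable (fun p : ℝ × ℝ => (p.1 - μ₁)^2) γ :=
    transfer_integrable measurable_fst h1 m1 (integrable_centered_sq_gaussian μ₁ σ₁ μ₁)
  have hG2 : Integrable (fun p : ℝ × ℝ => (p.2 - μ₂)^2) γ :=
    transfer_integrable measurable_snd h2 m2 (integrable_centered_sq_gaussian μ₂ σ₂ μ₂)
  have hF1 : Integrable (fun p : ℝ × ℝ => p.1 - μ₁) γ :=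
    transfer_integrable measurable_fst h1 m1'
      ((integrable_id_gaussian μ₁ σ₁).sub (integrable_const μ₁))
  have hG1 : Integrable (fun p : ℝ × ℝ => p.2 - μ₂) γ :=
    transfer_integrable measurable_snd h2 m2'
      ((integrable_id_gaussian μ₂ σ₂).sub (integrable_const μ₂))
  have EF2 : ∫ p : ℝ × ℝ, (p.1 - μ₁)^2 ∂γ = (σ₁:ℝ)^2 := by
    rw [transfer_integral measurable_fst h1 m1, integral_centered_sq_gaussian]
  have EG2 : ∫ p : ℝ × ℝ, (p.2 - μ₂)^2 ∂γ = (σ₂:ℝ)^2 := by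
    rw [transfer_integral measurable_snd h2 m2, integral_centered_sq_gaussian]
  have EF1 : ∫ p : ℝ × ℝ, (p.1 - μ₁) ∂γ = 0 := by
    rw [transfer_integral measurable_fst h1 m1',
      integral_sub (integrable_id_gaussian μ₁ σ₁) (integrable_const μ₁),
      integral_id_gaussian, integral_const]
    simp
  have EG1 : ∫ p : ℝ × ℝ, (p.2 - μ₂) ∂γ = 0 := by
    rw [transfer_integral measurable_snd h2 m2',
      integral_sub (integrable_id_gaussian μ₂ σ₂) (integrable_const μ₂),
      integral_id_gaussian, integral_const]
    simp
  have hprob : IsProbabilityMeasure γ := by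
    constructor
    have := congrArg (fun m : Measure ℝ => m Set.univ) h1
    simp only [Measure.map_apply measurable_fst MeasurableSet.univ, Set.preimage_univ] at this
    rw [this]
    exact measure_univ
  have hFGmeas : Measurable (fun p : ℝ × ℝ => (p.1 - μ₁) * (p.2 - μ₂)) :=
    (measurable_fst.sub_const μ₁).mul (measurable_snd.sub_const μ₂)
  have hbd : Integrable (fun p : ℝ × ℝ => ((p.1 - μ₁)^2 + (p.2 - μ₂)^2)/2) γ := by
    exact (hF2.add hG2).div_const 2
  have hFG : Integrable (fun p : ℝ × ℝ => (p.1 - μ₁) * (p.2 - μ₂)) γ := by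
    refine hbd.mono' hFGmeas.aestronglyMeasurable (ae_of_all _ fun p => ?_)
    rw [Real.norm_eq_abs, abs_mul]
    nlinarith [sq_nonneg (|p.1 - μ₁| - |p.2 - μ₂|), sq_abs (p.1 - μ₁), sq_abs (p.2 - μ₂),
      abs_nonneg (p.1 - μ₁), abs_nonneg (p.2 - μ₂)]
  -- Cauchy-Schwarz: cross term at most σ₁σ₂
  have hCS : ∫ p : ℝ × ℝ, (p.1 - μ₁) * (p.2 - μ₂) ∂γ ≤ (σ₁:ℝ) * σ₂ := by
    by_cases hσ₁ : σ₁ = 0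
    · have hz : (fun p : ℝ × ℝ => (p.1 - μ₁)^2) =ᵐ[γ] 0 := by
        refine (integral_eq_zero_iff_of_nonneg (fun p => sq_nonneg _) hF2).mp ?_
        rw [EF2, hσ₁]; simp
      have hz' : (fun p : ℝ × ℝ => (p.1 - μ₁) * (p.2 - μ₂)) =ᵐ[γ] 0 := by
        filter_upwards [hz] with p hp
        have h0 : (p.1 - μ₁)^2 = 0 := hp
        have : p.1 - μ₁ = 0 := by nlinarith
        simp [this]
      rw [integral_congr_ae hz', hσ₁]
      simp
    by_cases hσ₂ : σ₂ = 0
    · have hz : (fun p : ℝ × ℝ => (p.2 - μ₂)^2) =ᵐ[γ] 0 := by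
        refine (integral_eq_zero_iff_of_nonneg (fun p => sq_nonneg _) hG2).mp ?_
        rw [EG2, hσ₂]; simp
      have hz' : (fun p : ℝ × ℝ => (p.1 - μ₁) * (p.2 - μ₂)) =ᵐ[γ] 0 := by
        filter_upwards [hz] with p hp
        have h0 : (p.2 - μ₂)^2 = 0 := hp
        have : p.2 - μ₂ = 0 := by nlinarith
        simp [this]
      rw [integral_congr_ae hz', hσ₂]
      simp
    · have hp₁ : (0:ℝ) < σ₁ := by positivity
      have hp₂ : (0:ℝ) < σ₂ := by positivity
      have key : ∀ p : ℝ × ℝ, ((σ₂:ℝ) * (p.1 - μ₁) - (σ₁:ℝ) * (p.2 - μ₂))^2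
          = (σ₂:ℝ)^2 * (p.1 - μ₁)^2 + (σ₁:ℝ)^2 * (p.2 - μ₂)^2
            - 2 * ((σ₁:ℝ) * σ₂) * ((p.1 - μ₁) * (p.2 - μ₂)) := fun p => by ring
      have hnn : 0 ≤ ∫ p : ℝ × ℝ,
          ((σ₂:ℝ) * (p.1 - μ₁) - (σ₁:ℝ) * (p.2 - μ₂))^2 ∂γ :=
        integral_nonneg fun p => sq_nonneg _
      have iJ : Integrable (fun p : ℝ × ℝ => (σ₂:ℝ)^2 * (p.1 - μ₁)^2) γ := by
        exact hF2.const_mul _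
      have iK : Integrable (fun p : ℝ × ℝ => (σ₁:ℝ)^2 * (p.2 - μ₂)^2) γ := by
        exact hG2.const_mul _
      have iH : Integrable (fun p : ℝ × ℝ =>
          (σ₂:ℝ)^2 * (p.1 - μ₁)^2 + (σ₁:ℝ)^2 * (p.2 - μ₂)^2) γ := by exact iJ.add iK
      have iI : Integrable (fun p : ℝ × ℝ =>
          2 * ((σ₁:ℝ) * σ₂) * ((p.1 - μ₁) * (p.2 - μ₂))) γ := by exact hFG.const_mul _
      rw [integral_congr_ae (ae_of_all _ key), integral_sub iH iI, integral_add iJ iK,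
        integral_const_mul, integral_const_mul, integral_const_mul, EF2, EG2] at hnn
      nlinarith [mul_pos hp₁ hp₂]
  -- expansion of the squared distance
  have expand : ∀ p : ℝ × ℝ, (p.1 - p.2)^2
      = ((p.1 - μ₁)^2 + (p.2 - μ₂)^2 + (μ₁ - μ₂)^2)
        - 2 * ((p.1 - μ₁) * (p.2 - μ₂))
        + (2*(μ₁ - μ₂)) * (p.1 - μ₁) - (2*(μ₁ - μ₂)) * (p.2 - μ₂) := fun p => by ring
  have hint : Integrable (fun p : ℝ × ℝ =>
      ((p.1 - μ₁)^2 + (p.2 - μ₂)^2 + (μ₁ - μ₂)^2)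
        - 2 * ((p.1 - μ₁) * (p.2 - μ₂))
        + (2*(μ₁ - μ₂)) * (p.1 - μ₁) - (2*(μ₁ - μ₂)) * (p.2 - μ₂)) γ := by
    exact ((((hF2.add hG2).add (integrable_const _)).sub (hFG.const_mul 2)).add
      (hF1.const_mul _)).sub (hG1.const_mul _)
  have hIsq : Integrable (fun p : ℝ × ℝ => (p.1 - p.2)^2) γ :=
    hint.congr (ae_of_all _ fun p => (expand p).symm)
  refine ⟨hIsq, ?_⟩
  have hEq : ∫ p : ℝ × ℝ, (p.1 - p.2)^2 ∂γ
      = ((σ₁:ℝ)^2 + (σ₂:ℝ)^2 + (μ₁ - μ₂)^2)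
        - 2 * (∫ p : ℝ × ℝ, (p.1 - μ₁) * (p.2 - μ₂) ∂γ) := by
    have iG : Integrable (fun p : ℝ × ℝ => (p.1 - μ₁)^2 + (p.2 - μ₂)^2) γ := by
      exact hF2.add hG2
    have iE : Integrable (fun p : ℝ × ℝ =>
        (p.1 - μ₁)^2 + (p.2 - μ₂)^2 + (μ₁ - μ₂)^2) γ := by
      exact iG.add (integrable_const _)
    have iF : Integrable (fun p : ℝ × ℝ => 2 * ((p.1 - μ₁) * (p.2 - μ₂))) γ := by
      exact hFG.const_mul 2
    have iC : Integrable (fun p : ℝ × ℝ =>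
        (p.1 - μ₁)^2 + (p.2 - μ₂)^2 + (μ₁ - μ₂)^2 - 2 * ((p.1 - μ₁) * (p.2 - μ₂))) γ := by
      exact iE.sub iF
    have iD : Integrable (fun p : ℝ × ℝ => (2*(μ₁ - μ₂)) * (p.1 - μ₁)) γ := by
      exact hF1.const_mul _
    have iA : Integrable (fun p : ℝ × ℝ =>
        (p.1 - μ₁)^2 + (p.2 - μ₂)^2 + (μ₁ - μ₂)^2 - 2 * ((p.1 - μ₁) * (p.2 - μ₂))
          + (2*(μ₁ - μ₂)) * (p.1 - μ₁)) γ := by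
      exact iC.add iD
    have iB : Integrable (fun p : ℝ × ℝ => (2*(μ₁ - μ₂)) * (p.2 - μ₂)) γ := by
      exact hG1.const_mul _
    rw [integral_congr_ae (ae_of_all _ expand), integral_sub iA iB, integral_add iC iD,
      integral_sub iE iF, integral_add iG (integrable_const _), integral_add hF2 hG2,
      EF2, EG2, integral_const_mul, integral_const_mul, integral_const_mul, EF1, EG1,
      integral_const]
    simp
  rw [hEq]
  nlinarith

end Lower

/-- The optimal coupling of two 1D Gaussians. -/
lemma oneD_upper (μ₁ μ₂ : ℝ) (σ₁ σ₂ : ℝ≥0) :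
    ∃ γ : Measure (ℝ × ℝ), γ.map Prod.fst = gaussianReal μ₁ (σ₁^2) ∧
      γ.map Prod.snd = gaussianReal μ₂ (σ₂^2) ∧
      ∫ p : ℝ × ℝ, (p.1 - p.2)^2 ∂γ = (μ₁ - μ₂)^2 + ((σ₁:ℝ) - σ₂)^2 := by
  set φ : ℝ → ℝ × ℝ := fun z => ((σ₁:ℝ) * z + μ₁, (σ₂:ℝ) * z + μ₂) with hφdef
  have hφ : Measurable φ :=
    ((measurable_id.const_mul _).add_const _).prodMk
      ((measurable_id.const_mul _).add_const _)
  refine ⟨(gaussianReal 0 1).map φ, ?_, ?_, ?_⟩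
  · rw [Measure.map_map measurable_fst hφ]
    exact (gaussianReal_sq_repr μ₁ σ₁).symm
  · rw [Measure.map_map measurable_snd hφ]
    exact (gaussianReal_sq_repr μ₂ σ₂).symm
  · rw [integral_map hφ.aemeasurable (f := fun p : ℝ × ℝ => (p.1 - p.2)^2)
      (((measurable_fst.sub measurable_snd).pow_const 2).aestronglyMeasurable)]
    have : ∀ z : ℝ, ((φ z).1 - (φ z).2)^2 = (((σ₁:ℝ) - σ₂) * z + (μ₁ - μ₂))^2 :=
      fun z => by simp only [hφdef]; ring
    simp_rw [this, integral_affine_sq_std]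
    ring

/-- Generic computation of `W2 ^ 2` from an optimal coupling and a lower bound. -/
lemma W2_sq_eq {E : Type*} [NormedAddCommGroup E] [MeasurableSpace E]
    (μ ν : Measure E) (T : ℝ) (hT : 0 ≤ T)
    (hup : ∃ γ : Measure (E × E), γ.map Prod.fst = μ ∧ γ.map Prod.snd = ν ∧
      (∫ p : E × E, ‖p.1 - p.2‖ ^ 2 ∂γ) = T)
    (hlow : ∀ γ : Measure (E × E), γ.map Prod.fst = μ → γ.map Prod.snd = ν →
      T ≤ ∫ p : E × E, ‖p.1 - p.2‖ ^ 2 ∂γ) :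
    W2 μ ν ^ 2 = T := by
  have hW : W2 μ ν = T ^ ((1:ℝ)/2) := by
    apply le_antisymm
    · apply csInf_le
      · refine ⟨T ^ ((1:ℝ)/2), ?_⟩
        rintro r ⟨γ, hγ1, hγ2, rfl⟩
        exact Real.rpow_le_rpow hT (hlow γ hγ1 hγ2) (by norm_num)
      · obtain ⟨γ, hh1, hh2, hh3⟩ := hup
        exact ⟨γ, hh1, hh2, by rw [hh3]⟩
    · apply le_csInf
      · obtain ⟨γ, hh1, hh2, hh3⟩ := hup
        exact ⟨_, γ, hh1, hh2, rfl⟩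
      · rintro r ⟨γ, hγ1, hγ2, rfl⟩
        exact Real.rpow_le_rpow hT (hlow γ hγ1 hγ2) (by norm_num)
  rw [hW, ← Real.rpow_natCast (T ^ ((1:ℝ)/2)) 2, ← Real.rpow_mul hT]
  norm_num

section PiLemmas
variable {n : ℕ}

lemma pi_map_eval (ν : Fin n → Measure ℝ) [∀ i, IsProbabilityMeasure (ν i)] (i : Fin n) :
    (Measure.pi ν).map (fun z => z i) = ν i := by
  ext s hs
  rw [Measure.map_apply (measurable_pi_apply i) hs]
  have : (fun z : Fin n → ℝ => z i) ⁻¹' s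
      = Set.pi Set.univ (fun j => if j = i then s else Set.univ) := by
    ext z
    simp only [Set.mem_preimage, Set.mem_pi, Set.mem_univ, forall_true_left]
    constructor
    · intro hz j
      by_cases h : j = i
      · subst h; simpa using hz
      · simp [h]
    · intro hz
      have := hz i
      simpa using this
  rw [this, Measure.pi_pi]
  rw [Finset.prod_eq_single i (fun j _ hj => by simp [hj]) (by simp)]
  simp

lemma pi_map_coord (ν : Fin n → Measure ℝ) [∀ i, IsProbabilityMeasure (ν i)]
    (f : Fin n → ℝ → ℝ) (hf : ∀ i, Measurable (f i)) :
    (Measure.pi ν).map (fun z i => f i (z i)) = Measure.pi (fun i => (ν i).map (f i)) := by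
  have hmeas : Measurable (fun z : Fin n → ℝ => fun i => f i (z i)) :=
    measurable_pi_lambda _ (fun i => (hf i).comp (measurable_pi_apply i))
  refine (Measure.pi_eq fun s hs => ?_).symm
  rw [Measure.map_apply hmeas (MeasurableSet.univ_pi hs)]
  have : (fun z : Fin n → ℝ => fun i => f i (z i)) ⁻¹' Set.pi Set.univ s
      = Set.pi Set.univ (fun i => f i ⁻¹' s i) := by
    ext z
    simp [Set.mem_pi]
  rw [this, Measure.pi_pi]
  exact Finset.prod_congr rfl fun i _ =>
    (Measure.map_apply (hf i) (hs i)).symm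

lemma measurable_eval_euclidean (i : Fin n) :
    Measurable (fun x : EuclideanSpace ℝ (Fin n) => x i) :=
  (measurable_pi_apply i).comp (MeasurableEquiv.toLp 2 (Fin n → ℝ)).symm.measurable

lemma isoGaussian_map_eval (m : EuclideanSpace ℝ (Fin n)) (v : ℝ≥0)
    (i : Fin n) :
    (isoGaussian n m v).map (fun x => x i) = gaussianReal (m i) v := by
  rw [isoGaussian, Measure.map_map (measurable_eval_euclidean i)
    (MeasurableEquiv.toLp 2 (Fin n → ℝ)).measurable]
  have : ((fun x : EuclideanSpace ℝ (Fin n) => x i)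
      ∘ (MeasurableEquiv.toLp 2 (Fin n → ℝ))) = fun z : Fin n → ℝ => z i := rfl
  rw [this, pi_map_eval]

lemma euclidean_norm_sq (x : EuclideanSpace ℝ (Fin n)) :
    ‖x‖^2 = ∑ i, (x i)^2 := by
  rw [EuclideanSpace.norm_eq]
  rw [Real.sq_sqrt (by positivity)]
  exact Finset.sum_congr rfl fun i _ => by rw [Real.norm_eq_abs, sq_abs]

end PiLemmas

section ND
variable {n : ℕ}

lemma nD_upper (m₁ m₂ : EuclideanSpace ℝ (Fin n)) (σ₁ σ₂ : ℝ≥0) :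
    ∃ γ : Measure (EuclideanSpace ℝ (Fin n) × EuclideanSpace ℝ (Fin n)),
      γ.map Prod.fst = isoGaussian n m₁ (σ₁^2) ∧
      γ.map Prod.snd = isoGaussian n m₂ (σ₂^2) ∧
      ∫ p, ‖p.1 - p.2‖^2 ∂γ = ‖m₁ - m₂‖^2 + n * ((σ₁:ℝ) - σ₂)^2 := by
  classical
  set P0 : Measure (Fin n → ℝ) := Measure.pi (fun _ => gaussianReal 0 1) with hP0
  set es := (MeasurableEquiv.toLp 2 (Fin n → ℝ)) with hes
  set ψ₁ : (Fin n → ℝ) → EuclideanSpace ℝ (Fin n) := fun z => es (fun i => (σ₁:ℝ) * z i + m₁ i) with hψ₁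
  set ψ₂ : (Fin n → ℝ) → EuclideanSpace ℝ (Fin n) := fun z => es (fun i => (σ₂:ℝ) * z i + m₂ i) with hψ₂
  have hco₁ : Measurable (fun z : Fin n → ℝ => fun i => (σ₁:ℝ) * z i + m₁ i) :=
    measurable_pi_lambda _ (fun i => ((measurable_pi_apply i).const_mul _).add_const _)
  have hco₂ : Measurable (fun z : Fin n → ℝ => fun i => (σ₂:ℝ) * z i + m₂ i) :=
    measurable_pi_lambda _ (fun i => ((measurable_pi_apply i).const_mul _).add_const _)
  have hψ₁m : Measurable ψ₁ := es.measurable.comp hco₁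
  have hψ₂m : Measurable ψ₂ := es.measurable.comp hco₂
  set φ : (Fin n → ℝ) → EuclideanSpace ℝ (Fin n) × EuclideanSpace ℝ (Fin n) := fun z => (ψ₁ z, ψ₂ z) with hφdef
  have hφ : Measurable φ := hψ₁m.prodMk hψ₂m
  have hmarg : ∀ (σ : ℝ≥0) (m : EuclideanSpace ℝ (Fin n)), P0.map (fun z => es (fun i => (σ:ℝ) * z i + m i))
      = isoGaussian n m (σ^2) := by
    intro σ m
    have h1 : P0.map (fun z => es (fun i => (σ:ℝ) * z i + m i))
        = (P0.map (fun z i => (σ:ℝ) * z i + m i)).map es := by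
      rw [Measure.map_map es.measurable
        (measurable_pi_lambda _ (fun i => ((measurable_pi_apply i).const_mul _).add_const _))]
      rfl
    rw [h1, pi_map_coord _ (fun i t => (σ:ℝ) * t + m i)
      (fun i => (measurable_id.const_mul _).add_const _)]
    rw [isoGaussian]
    congr 1
    exact congrArg Measure.pi (funext fun i => (gaussianReal_sq_repr (m i) σ).symm)
  refine ⟨P0.map φ, ?_, ?_, ?_⟩
  · rw [Measure.map_map measurable_fst hφ]
    exact hmarg σ₁ m₁
  · rw [Measure.map_map measurable_snd hφ]
    exact hmarg σ₂ m₂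
  · rw [integral_map hφ.aemeasurable (f := fun p => ‖p.1 - p.2‖^2)
      (((continuous_fst.sub continuous_snd).norm.pow 2).aestronglyMeasurable)]
    have hpt : ∀ z : Fin n → ℝ, ‖(φ z).1 - (φ z).2‖^2
        = ∑ i, (((σ₁:ℝ) - σ₂) * z i + (m₁ i - m₂ i))^2 := by
      intro z
      rw [euclidean_norm_sq]
      refine Finset.sum_congr rfl fun i _ => ?_
      have : ((φ z).1 - (φ z).2) i = ((σ₁:ℝ) - σ₂) * z i + (m₁ i - m₂ i) := by
        simp only [hφdef, hψ₁, hψ₂, PiLp.sub_apply]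
        have h1 : ∀ w : Fin n → ℝ, (es w : EuclideanSpace ℝ (Fin n)) i = w i := fun w => rfl
        rw [h1, h1]
        ring
      rw [this]
    simp_rw [hpt]
    have hInt : ∀ i : Fin n, Integrable
        (fun z : Fin n → ℝ => (((σ₁:ℝ) - σ₂) * z i + (m₁ i - m₂ i))^2) P0 := fun i =>
      transfer_integrable (measurable_pi_apply i) (pi_map_eval _ i)
        ((((measurable_id.const_mul _).add_const _)).pow_const 2)
        (integrable_affine_sq_std _ _)
    rw [integral_finset_sum _ (fun i _ => hInt i)]
    have hterm : ∀ i : Fin n, ∫ z : Fin n → ℝ,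
        (((σ₁:ℝ) - σ₂) * z i + (m₁ i - m₂ i))^2 ∂P0
        = ((σ₁:ℝ) - σ₂)^2 + (m₁ i - m₂ i)^2 := fun i => by
      rw [transfer_integral (measurable_pi_apply i) (pi_map_eval _ i)
        (g := fun t => (((σ₁:ℝ) - σ₂) * t + (m₁ i - m₂ i))^2)
        ((((measurable_id.const_mul _).add_const _)).pow_const 2),
        integral_affine_sq_std]
    simp_rw [hterm]
    rw [Finset.sum_add_distrib, Finset.sum_const, Finset.card_univ, Fintype.card_fin,
      euclidean_norm_sq (m₁ - m₂)]
    have : ∀ i : Fin n, ((m₁ - m₂) i)^2 = (m₁ i - m₂ i)^2 := fun i => by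
      rw [PiLp.sub_apply]
    simp_rw [this]
    ring

lemma nD_lower (m₁ m₂ : EuclideanSpace ℝ (Fin n)) (σ₁ σ₂ : ℝ≥0)
    (γ : Measure (EuclideanSpace ℝ (Fin n) × EuclideanSpace ℝ (Fin n)))
    (h1 : γ.map Prod.fst = isoGaussian n m₁ (σ₁^2))
    (h2 : γ.map Prod.snd = isoGaussian n m₂ (σ₂^2)) :
    ‖m₁ - m₂‖^2 + n * ((σ₁:ℝ) - σ₂)^2 ≤ ∫ p, ‖p.1 - p.2‖^2 ∂γ := by
  classical
  have hψm : ∀ i : Fin n, Measurable (fun p : EuclideanSpace ℝ (Fin n) × EuclideanSpace ℝ (Fin n) => (p.1 i, p.2 i)) := fun i =>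
    ((measurable_eval_euclidean i).comp measurable_fst).prodMk
      ((measurable_eval_euclidean i).comp measurable_snd)
  have hmargs : ∀ i : Fin n,
      (γ.map (fun p : EuclideanSpace ℝ (Fin n) × EuclideanSpace ℝ (Fin n) => (p.1 i, p.2 i))).map Prod.fst = gaussianReal (m₁ i) (σ₁^2) ∧
      (γ.map (fun p : EuclideanSpace ℝ (Fin n) × EuclideanSpace ℝ (Fin n) => (p.1 i, p.2 i))).map Prod.snd = gaussianReal (m₂ i) (σ₂^2) := by
    intro i
    constructor
    · rw [Measure.map_map measurable_fst (hψm i)]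
      have : (Prod.fst ∘ (fun p : EuclideanSpace ℝ (Fin n) × EuclideanSpace ℝ (Fin n) => (p.1 i, p.2 i)))
          = (fun x : EuclideanSpace ℝ (Fin n) => x i) ∘ Prod.fst := rfl
      rw [this, ← Measure.map_map (measurable_eval_euclidean i) measurable_fst, h1,
        isoGaussian_map_eval]
    · rw [Measure.map_map measurable_snd (hψm i)]
      have : (Prod.snd ∘ (fun p : EuclideanSpace ℝ (Fin n) × EuclideanSpace ℝ (Fin n) => (p.1 i, p.2 i)))
          = (fun x : EuclideanSpace ℝ (Fin n) => x i) ∘ Prod.snd := rfl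
      rw [this, ← Measure.map_map (measurable_eval_euclidean i) measurable_snd, h2,
        isoGaussian_map_eval]
  have hbound := fun i : Fin n => oneD_coupling_bound (hmargs i).1 (hmargs i).2
  have hmsq : Measurable (fun q : ℝ × ℝ => (q.1 - q.2)^2) :=
    (measurable_fst.sub measurable_snd).pow_const 2
  have hInt : ∀ i : Fin n, Integrable (fun p : EuclideanSpace ℝ (Fin n) × EuclideanSpace ℝ (Fin n) => (p.1 i - p.2 i)^2) γ := by
    intro i
    have := (integrable_map_measure hmsq.aestronglyMeasurable (hψm i).aemeasurable).mp
      (hbound i).1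
    exact this
  have hIntEq : ∀ i : Fin n, ∫ p : EuclideanSpace ℝ (Fin n) × EuclideanSpace ℝ (Fin n), (p.1 i - p.2 i)^2 ∂γ
      = ∫ q : ℝ × ℝ, (q.1 - q.2)^2 ∂(γ.map (fun p : EuclideanSpace ℝ (Fin n) × EuclideanSpace ℝ (Fin n) => (p.1 i, p.2 i))) := fun i =>
    (integral_map (hψm i).aemeasurable hmsq.aestronglyMeasurable).symm
  have hpt : ∀ p : EuclideanSpace ℝ (Fin n) × EuclideanSpace ℝ (Fin n), ‖p.1 - p.2‖^2 = ∑ i, (p.1 i - p.2 i)^2 := by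
    intro p
    rw [euclidean_norm_sq]
    exact Finset.sum_congr rfl fun i _ => by rw [PiLp.sub_apply]
  calc ‖m₁ - m₂‖^2 + n * ((σ₁:ℝ) - σ₂)^2
      = ∑ i : Fin n, ((m₁ i - m₂ i)^2 + ((σ₁:ℝ) - σ₂)^2) := by
        rw [Finset.sum_add_distrib, Finset.sum_const, Finset.card_univ, Fintype.card_fin,
          euclidean_norm_sq (m₁ - m₂)]
        have : ∀ i : Fin n, ((m₁ - m₂) i)^2 = (m₁ i - m₂ i)^2 := fun i => by
          rw [PiLp.sub_apply]
        simp_rw [this]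
        ring
    _ ≤ ∑ i : Fin n, ∫ p : EuclideanSpace ℝ (Fin n) × EuclideanSpace ℝ (Fin n), (p.1 i - p.2 i)^2 ∂γ := by
        refine Finset.sum_le_sum fun i _ => ?_
        rw [hIntEq i]
        exact (hbound i).2
    _ = ∫ p : EuclideanSpace ℝ (Fin n) × EuclideanSpace ℝ (Fin n), ∑ i, (p.1 i - p.2 i)^2 ∂γ :=
        (integral_finset_sum _ (fun i _ => hInt i)).symm
    _ = ∫ p, ‖p.1 - p.2‖^2 ∂γ := by
        exact integral_congr_ae (ae_of_all _ fun p => (hpt p).symm)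

end ND

/-- The squared 2-Wasserstein distance between 1D Gaussians `N(μ₁, σ₁²)` and `N(μ₂, σ₂²)`
equals `(μ₁ − μ₂)² + (σ₁ − σ₂)²`; for isotropic Gaussians on `ℝⁿ` it equals
`‖m₁ − m₂‖² + n (σ₁ − σ₂)²`. -/
theorem stmt_3 (μ₁ μ₂ : ℝ) (σ₁ σ₂ : ℝ≥0) (n : ℕ)
    (m₁ m₂ : EuclideanSpace ℝ (Fin n)) :
    (W2 (gaussianReal μ₁ (σ₁ ^ 2)) (gaussianReal μ₂ (σ₂ ^ 2))) ^ 2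
        = (μ₁ - μ₂) ^ 2 + ((σ₁ : ℝ) - σ₂) ^ 2 ∧
      (W2 (isoGaussian n m₁ (σ₁ ^ 2)) (isoGaussian n m₂ (σ₂ ^ 2))) ^ 2
        = ‖m₁ - m₂‖ ^ 2 + n * ((σ₁ : ℝ) - σ₂) ^ 2 := by
  constructor
  · have hnorm : ∀ γ : Measure (ℝ × ℝ),
        (∫ p : ℝ × ℝ, ‖p.1 - p.2‖ ^ 2 ∂γ) = ∫ p : ℝ × ℝ, (p.1 - p.2) ^ 2 ∂γ := fun γ => by
      simp_rw [Real.norm_eq_abs, sq_abs]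
    apply W2_sq_eq _ _ _ (by positivity)
    · obtain ⟨γ, ha, hb, hc⟩ := oneD_upper μ₁ μ₂ σ₁ σ₂
      exact ⟨γ, ha, hb, by rw [hnorm γ, hc]⟩
    · intro γ ha hb
      rw [hnorm γ]
      exact (oneD_coupling_bound ha hb).2
  · apply W2_sq_eq _ _ _ (by positivity)
    · exact nD_upper m₁ m₂ σ₁ σ₂
    · exact fun γ ha hb => nD_lower m₁ m₂ σ₁ σ₂ γ ha hb
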